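/- For every n ≥ 1, any SDNF formula equivalent to ⋀_{j=1}^{n} [(□_i p_j ∧ ◇_i p_j) ∨ (□_i p'_j ∧ ◇_i p'_j)] must contain at least 2^n disjuncts (epistemic terms). -/

import Mathlib

universe u v

inductive Fm (A P : Type) : Type
  | tru : Fm A P
  | var : P → Fm A P
  | neg : Fm A P → Fm A P
  | and : Fm A P → Fm A P → Fm A P
  | box : A → Fm A P → Fm A P

namespace Fm
variable {A P : Type}
def or (φ ψ : Fm A P) : Fm A P := neg ((neg φ).and (neg ψ))
def bot : Fm A P := neg tru
def dia (i : A) (φ : Fm A P) : Fm A P := neg (box i (neg φ))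
end Fm

structure KM (A P : Type) where
  S : Type
  R : A → S → S → Prop
  V : S → P → Prop

variable {A P : Type}

def Sat (M : KM A P) : M.S → Fm A P → Prop
  | _, .tru => True
  | s, .var p => M.V s p
  | s, .neg φ => ¬ Sat M s φ
  | s, .and φ ψ => Sat M s φ ∧ Sat M s ψ
  | s, .box i φ => ∀ t, M.R i s t → Sat M t φ

def Satisfiable (φ : Fm A P) : Prop := ∃ (M : KM A P) (s : M.S), Sat M s φ

def Entails (φ ψ : Fm A P) : Prop := ∀ (M : KM A P) (s : M.S), Sat M s φ → Sat M s ψ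

def FEquiv (φ ψ : Fm A P) : Prop := Entails φ ψ ∧ Entails ψ φ

def IsProp : Fm A P → Prop
  | .tru => True
  | .var _ => True
  | .neg φ => IsProp φ
  | .and φ ψ => IsProp φ ∧ IsProp ψ
  | .box _ _ => False

def Basic (φ : Fm A P) : Prop :=
  IsProp φ ∨ (∃ i ψ, φ = Fm.box i ψ) ∨ (∃ i ψ, φ = Fm.dia i ψ)

def conj : List (Fm A P) → Fm A P
  | [] => Fm.tru
  | φ :: L => φ.and (conj L)

def disj : List (Fm A P) → Fm A P
  | [] => Fm.bot
  | φ :: L => φ.or (disj L)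

def EpTerm (L : List (Fm A P)) : Prop := ∀ c ∈ L, Basic c

def LogSep (L : List (Fm A P)) : Prop :=
  ∀ η : Fm A P, Basic η → Entails (conj L) η → ∃ α ∈ L, Entails α η

def fvars : Fm A P → Set P
  | .tru => ∅
  | .var p => {p}
  | .neg φ => fvars φ
  | .and φ ψ => fvars φ ∪ fvars ψ
  | .box _ φ => fvars φ

def fsize : Fm A P → ℕ
  | .tru => 1
  | .var _ => 1
  | .neg φ => fsize φ + 1
  | .and φ ψ => fsize φ + fsize ψ + 1
  | .box _ φ => fsize φ + 1

mutual
  inductive IsSTE : Fm A P → Prop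
    | prop {α : Fm A P} : IsProp α → IsSTE α
    | mk (α : Fm A P) (B : List (A × Fm A P × List (Fm A P))) :
        IsProp α →
        (∀ x ∈ B, IsSDNF x.2.1) →
        (∀ x ∈ B, ∀ γ ∈ x.2.2, IsSDNF γ) →
        (∀ x ∈ B, ∀ γ ∈ x.2.2, Entails γ x.2.1) →
        IsSTE (α.and (conj (B.map fun x =>
          (Fm.box x.1 x.2.1).and (conj (x.2.2.map (Fm.dia x.1))))))
  inductive IsSDNF : Fm A P → Prop
    | single {φ : Fm A P} : IsSTE φ → IsSDNF φ
    | or {φ ψ : Fm A P} : IsSDNF φ → IsSDNF ψ → IsSDNF (φ.or ψ)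
end

inductive IsLit : Fm A P → Prop
  | pos (p : P) : IsLit (Fm.var p)
  | neg (p : P) : IsLit (Fm.neg (Fm.var p))

inductive IsTE : Fm A P → Prop
  | lit {φ : Fm A P} : IsLit φ → IsTE φ
  | and {φ ψ : Fm A P} : IsTE φ → IsTE ψ → IsTE (φ.and ψ)

def cover (i : A) (Φ : List (Fm A P)) : Fm A P :=
  (Fm.box i (disj Φ)).and (conj (Φ.map (Fm.dia i)))

inductive IsCDNF : Fm A P → Prop
  | base (τ : Fm A P) (B : List (A × List (Fm A P))) :
      IsTE τ → Satisfiable τ →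
      (∀ x ∈ B, ∀ φ ∈ x.2, IsCDNF φ) →
      IsCDNF (τ.and (conj (B.map fun x => cover x.1 x.2)))
  | or {φ ψ : Fm A P} : IsCDNF φ → IsCDNF ψ → IsCDNF (φ.or ψ)

section Aux

lemma sat_or {M : KM A P} {s : M.S} {φ ψ : Fm A P} :
    Sat M s (φ.or ψ) ↔ Sat M s φ ∨ Sat M s ψ := by
  simp only [Fm.or, Sat]; tauto

lemma sat_conj {M : KM A P} {s : M.S} {L : List (Fm A P)} :
    Sat M s (conj L) ↔ ∀ φ ∈ L, Sat M s φ := by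
  induction L with
  | nil => simp [conj, Sat]
  | cons a L ih => simp [conj, Sat, ih]

lemma sat_disj {M : KM A P} {s : M.S} {L : List (Fm A P)} :
    Sat M s (disj L) ↔ ∃ φ ∈ L, Sat M s φ := by
  induction L with
  | nil => simp [disj, Fm.bot, Sat]
  | cons a L ih => simp [disj, sat_or, ih]

lemma sat_dia {M : KM A P} {s : M.S} {a : A} {φ : Fm A P} :
    Sat M s (Fm.dia a φ) ↔ ∃ t, M.R a s t ∧ Sat M t φ := by
  simp only [Fm.dia, Sat]; push_neg; simp

lemma sat_invariant {M M' : KM A P} {s : M.S} {s' : M'.S}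
    (h : ∀ a t, ¬ M.R a s t) (h' : ∀ a t, ¬ M'.R a s' t)
    (hv : ∀ q, M.V s q ↔ M'.V s' q) : ∀ φ : Fm A P, Sat M s φ ↔ Sat M' s' φ
  | .tru => by simp [Sat]
  | .var q => hv q
  | .neg φ => by simp only [Sat]; rw [sat_invariant h h' hv φ]
  | .and φ ψ => by
      simp only [Sat]; rw [sat_invariant h h' hv φ, sat_invariant h h' hv ψ]
  | .box a φ => by
      simp only [Sat]
      constructor <;> intro _ t ht
      · exact absurd ht (h' a t)
      · exact absurd ht (h a t)

lemma sat_prop_invariant {M M' : KM A P} {s : M.S} {s' : M'.S}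
    (hv : ∀ q, M.V s q ↔ M'.V s' q) :
    ∀ φ : Fm A P, IsProp φ → (Sat M s φ ↔ Sat M' s' φ)
  | .tru, _ => by simp [Sat]
  | .var q, _ => hv q
  | .neg φ, hp => by simp only [Sat]; rw [sat_prop_invariant hv φ hp]
  | .and φ ψ, hp => by
      simp only [Sat]; rw [sat_prop_invariant hv φ hp.1, sat_prop_invariant hv ψ hp.2]
  | .box a φ, hp => hp.elim

/-- A rooted model with root `none` and leaves `some b` (for `b` with `act b`),
all leaves dead ends, with valuations `w b` at leaf `b` and all-false at root. -/
@[reducible] def RootMod (i : A) (act : Bool → Prop) (w : Bool → P → Prop) : KM A P where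
  S := Option Bool
  R a x y := a = i ∧ x = none ∧ ∃ b, act b ∧ y = some b
  V x q := match x with | none => False | some b => w b q

lemma rootmod_leaf_dead {i : A} {act : Bool → Prop} {w : Bool → P → Prop} {b : Bool} :
    ∀ (a : A) (t : (RootMod i act w).S), ¬ (RootMod i act w).R a (some b) t := by
  rintro a t ⟨-, h, -⟩; exact Option.some_ne_none b h

lemma rootmod_leaf_sat {i i' : A} {act act' : Bool → Prop} {w w' : Bool → P → Prop}
    {b b' : Bool} (hw : ∀ q, w b q ↔ w' b' q) (φ : Fm A P) :
    Sat (RootMod i act w) (some b) φ ↔ Sat (RootMod i' act' w') (some b') φ :=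
  sat_invariant rootmod_leaf_dead rootmod_leaf_dead hw φ

/-- Merging two single-leaf models at the root preserves satisfaction of STEs. -/
lemma merge_ste {i : A} {T : Fm A P} (hT : IsSTE T) {w1 w2 : P → Prop}
    (h1 : Sat (RootMod i (· = false) fun _ => w1) none T)
    (h2 : Sat (RootMod i (· = false) fun _ => w2) none T) :
    Sat (RootMod i (fun _ => True) fun b => bif b then w2 else w1) none T := by
  let M1 : KM A P := RootMod i (· = false) fun _ => w1
  let M2 : KM A P := RootMod i (· = false) fun _ => w2
  let Mm : KM A P := RootMod i (fun _ => True) fun b => bif b then w2 else w1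
  cases hT with
  | prop hα =>
    exact (sat_prop_invariant (M := M1) (M' := Mm) (s := none) (s' := none)
      (fun q => Iff.rfl) T hα).mp h1
  | mk α B hα _ _ _ =>
    obtain ⟨hα1, hB1⟩ := h1
    obtain ⟨hα2, hB2⟩ := h2
    refine ⟨(sat_prop_invariant (M := M1) (M' := Mm) (s := none) (s' := none)
      (fun q => Iff.rfl) α hα).mp hα1, ?_⟩
    rw [sat_conj] at hB1 hB2 ⊢
    intro φ hφ
    rw [List.mem_map] at hφ
    obtain ⟨x, hx, rfl⟩ := hφ
    obtain ⟨hb1, hd1⟩ := hB1 _ (List.mem_map_of_mem hx)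
    obtain ⟨hb2, hd2⟩ := hB2 _ (List.mem_map_of_mem hx)
    constructor
    · -- box conjunct
      rintro t ⟨hai, -, b, -, rfl⟩
      cases b with
      | false =>
        have := hb1 (some false) ⟨hai, rfl, false, rfl, rfl⟩
        exact (rootmod_leaf_sat (i := i) (i' := i) (act := (· = false))
          (act' := fun _ => True) (w := fun _ => w1)
          (w' := fun b => bif b then w2 else w1) (b := false) (b' := false)
          (fun q => Iff.rfl) _).mp this
      | true =>
        have := hb2 (some false) ⟨hai, rfl, false, rfl, rfl⟩
        exact (rootmod_leaf_sat (i := i) (i' := i) (act := (· = false))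
          (act' := fun _ => True) (w := fun _ => w2)
          (w' := fun b => bif b then w2 else w1) (b := false) (b' := true)
          (fun q => Iff.rfl) _).mp this
    · -- diamond conjuncts
      rw [sat_conj] at hd1 ⊢
      intro ψ hψ
      rw [List.mem_map] at hψ
      obtain ⟨γ, hγ, rfl⟩ := hψ
      have := hd1 _ (List.mem_map_of_mem hγ)
      rw [sat_dia] at this ⊢
      obtain ⟨t, ⟨hai, -, b, hb, rfl⟩, hsat⟩ := this
      subst hb
      exact ⟨some false, ⟨hai, rfl, false, trivial, rfl⟩,
        (rootmod_leaf_sat (i := i) (i' := i) (act := (· = false))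
          (act' := fun _ => True) (w := fun _ => w1)
          (w' := fun b => bif b then w2 else w1) (b := false) (b' := false)
          (fun q => Iff.rfl) _).mp hsat⟩

/-- The leaf valuation determined by a boolean choice `f`. -/
def leafV {n : ℕ} (p p' : Fin n → P) (f : Fin n → Bool) (q : P) : Prop :=
  ∃ j, (f j = true ∧ q = p j) ∨ (f j = false ∧ q = p' j)

end Aux

theorem sdnf_lower_bound (n : ℕ) (hn : 1 ≤ n) (i : A)
    (p p' : Fin n → P)
    (hdistinct : Function.Injective (Sum.elim p p' : Fin n ⊕ Fin n → P))
    (Ts : List (Fm A P)) (hTs : ∀ t ∈ Ts, IsSTE t)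
    (heq : FEquiv (disj Ts)
      (conj ((List.finRange n).map fun j =>
        ((Fm.box i (Fm.var (p j))).and (Fm.dia i (Fm.var (p j)))).or
        ((Fm.box i (Fm.var (p' j))).and (Fm.dia i (Fm.var (p' j))))))) :
    2 ^ n ≤ Ts.length := by
  classical
  -- injectivity facts
  have hp : Function.Injective p := fun j k h => by
    have := hdistinct (a₁ := Sum.inl j) (a₂ := Sum.inl k) h
    exact Sum.inl.inj this
  have hp' : Function.Injective p' := fun j k h => by
    have := hdistinct (a₁ := Sum.inr j) (a₂ := Sum.inr k) h
    exact Sum.inr.inj this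
  have hpp' : ∀ j k, p j ≠ p' k := fun j k h => by
    have := hdistinct (a₁ := Sum.inl j) (a₂ := Sum.inr k) h
    cases this
  -- reading off leaf valuations
  have hvp : ∀ (f : Fin n → Bool) (j : Fin n), leafV p p' f (p j) → f j = true := by
    rintro f j ⟨k, ⟨hfk, hq⟩ | ⟨hfk, hq⟩⟩
    · rw [hp hq]; exact hfk
    · exact absurd hq (hpp' j k)
  have hvp' : ∀ (f : Fin n → Bool) (j : Fin n), leafV p p' f (p' j) → f j = false := by
    rintro f j ⟨k, ⟨hfk, hq⟩ | ⟨hfk, hq⟩⟩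
    · exact absurd hq.symm (hpp' k j)
    · rw [hp' hq]; exact hfk
  set Φ : Fm A P := conj ((List.finRange n).map fun j =>
        ((Fm.box i (Fm.var (p j))).and (Fm.dia i (Fm.var (p j)))).or
        ((Fm.box i (Fm.var (p' j))).and (Fm.dia i (Fm.var (p' j))))) with hΦdef
  -- Step A: each single-leaf model satisfies Φ at the root
  have hsatΦ : ∀ f : Fin n → Bool,
      Sat (RootMod i (· = false) fun _ => leafV p p' f) none Φ := by
    intro f
    rw [hΦdef, sat_conj]
    intro φ hφ
    rw [List.mem_map] at hφ
    obtain ⟨j, -, rfl⟩ := hφ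
    rw [sat_or]
    cases hfj : f j with
    | true =>
      left
      constructor
      · rintro t ⟨-, -, b, rfl, rfl⟩
        exact ⟨j, Or.inl ⟨hfj, rfl⟩⟩
      · rw [sat_dia]
        exact ⟨some false, ⟨rfl, rfl, false, rfl, rfl⟩, ⟨j, Or.inl ⟨hfj, rfl⟩⟩⟩
    | false =>
      right
      constructor
      · rintro t ⟨-, -, b, rfl, rfl⟩
        exact ⟨j, Or.inr ⟨hfj, rfl⟩⟩
      · rw [sat_dia]
        exact ⟨some false, ⟨rfl, rfl, false, rfl, rfl⟩, ⟨j, Or.inr ⟨hfj, rfl⟩⟩⟩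
  -- Step B: choose, for each f, an index of a disjunct satisfied at the root
  have hex : ∀ f : Fin n → Bool, ∃ k : Fin Ts.length,
      Sat (RootMod i (· = false) fun _ => leafV p p' f) none (Ts.get k) := by
    intro f
    have h := heq.2 (RootMod i (· = false) fun _ => leafV p p' f) none (hsatΦ f)
    rw [sat_disj] at h
    obtain ⟨T, hT, hs⟩ := h
    obtain ⟨k, rfl⟩ := List.mem_iff_get.mp hT
    exact ⟨k, hs⟩
  choose k hk using hex
  -- Step C: injectivity of the index map
  have hinj : Function.Injective k := by
    intro f g hfg
    by_contra hne
    obtain ⟨j, hj⟩ : ∃ j, f j ≠ g j := by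
      by_contra h
      push_neg at h
      exact hne (funext h)
    have hT : IsSTE (Ts.get (k f)) := hTs _ (Ts.get_mem _)
    have h1 : Sat (RootMod i (· = false) fun _ => leafV p p' f) none (Ts.get (k f)) := hk f
    have h2 : Sat (RootMod i (· = false) fun _ => leafV p p' g) none (Ts.get (k f)) := by
      rw [hfg]; exact hk g
    have hm := merge_ste hT h1 h2
    have hΦm : Sat (RootMod i (fun _ => True)
        fun b => bif b then leafV p p' g else leafV p p' f) none Φ :=
      heq.1 (RootMod i (fun _ => True) fun b => bif b then leafV p p' g else leafV p p' f) none (sat_disj.mpr ⟨Ts.get (k f), Ts.get_mem _, hm⟩)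
    rw [hΦdef, sat_conj] at hΦm
    have hj' := hΦm _ (List.mem_map_of_mem (List.mem_finRange j))
    rw [sat_or] at hj'
    cases hj' with
    | inl h =>
      have hf : leafV p p' f (p j) := h.1 (some false) ⟨rfl, rfl, false, trivial, rfl⟩
      have hg : leafV p p' g (p j) := h.1 (some true) ⟨rfl, rfl, true, trivial, rfl⟩
      exact hj ((hvp f j hf).trans (hvp g j hg).symm)
    | inr h =>
      have hf : leafV p p' f (p' j) := h.1 (some false) ⟨rfl, rfl, false, trivial, rfl⟩
      have hg : leafV p p' g (p' j) := h.1 (some true) ⟨rfl, rfl, true, trivial, rfl⟩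
      exact hj ((hvp' f j hf).trans (hvp' g j hg).symm)
  -- Step D: counting
  have := Fintype.card_le_of_injective k hinj
  simpa using this
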